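/- arXiv:1811.04775 — 2 statements merged into one kernel-verified Lean document; each statement's English description precedes it below -/
import Mathlib

section
/- For positive integers r₁,…,r_M summing to rM and any 1 ≤ K' ≤ M, the identity η(K'-1)·(∑ᵢ rᵢ) = (1/(M-K'+1))·∑_{{i₁,…,i_{K'}}⊆{1,…,M}} [∏_{t=1}^{K'} r_{i_t} · ∑_{j≠k, j,k∈{1,…,K'}} r_{i_k}/r_{i_j}] + K'·η(K') holds, where η(K) denotes the K-th elementary symmetric polynomial of r₁,…,r_M. -/
open Finset

lemma pair_sum {M K : ℕ} (hK : 1 ≤ K) (f : Finset (Fin M) → Fin M → ℝ) :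
    ∑ T ∈ Finset.powersetCard K Finset.univ, ∑ j ∈ T, f (T.erase j) j
      = ∑ S ∈ Finset.powersetCard (K - 1) Finset.univ, ∑ j ∈ Sᶜ, f S j := by
  rw [Finset.sum_sigma', Finset.sum_sigma']
  apply Finset.sum_nbij' (fun p => (⟨p.1.erase p.2, p.2⟩ : Σ _ : Finset (Fin M), Fin M))
    (fun p => (⟨insert p.2 p.1, p.2⟩ : Σ _ : Finset (Fin M), Fin M))
  · rintro ⟨T, j⟩ hp
    simp only [Finset.mem_sigma, Finset.mem_powersetCard_univ] at hp ⊢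
    obtain ⟨hT, hj⟩ := hp
    refine ⟨?_, ?_⟩
    · rw [Finset.card_erase_of_mem hj, hT]
    · simp [Finset.mem_compl]
  · rintro ⟨S, j⟩ hp
    simp only [Finset.mem_sigma, Finset.mem_powersetCard_univ, Finset.mem_compl] at hp ⊢
    obtain ⟨hS, hj⟩ := hp
    refine ⟨?_, Finset.mem_insert_self _ _⟩
    rw [Finset.card_insert_of_notMem hj, hS]
    omega
  · rintro ⟨T, j⟩ hp
    simp only [Finset.mem_sigma] at hp
    simp [Finset.insert_erase hp.2]
  · rintro ⟨S, j⟩ hp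
    simp only [Finset.mem_sigma, Finset.mem_compl] at hp
    simp [Finset.erase_insert hp.2]
  · rintro ⟨T, j⟩ _
    rfl

theorem stmt1 (M : ℕ) (r : Fin M → ℝ) (hpos : ∀ i, 0 < r i)
    (r0 : ℝ) (hsum : ∑ i, r i = r0 * M)
    (K' : ℕ) (hK1 : 1 ≤ K') (hKM : K' ≤ M) :
    (∑ S ∈ Finset.powersetCard (K' - 1) (Finset.univ : Finset (Fin M)), ∏ i ∈ S, r i)
        * (∑ i, r i)
      = (1 / ((M : ℝ) - K' + 1)) *
          (∑ S ∈ Finset.powersetCard K' (Finset.univ : Finset (Fin M)),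
            ((∏ i ∈ S, r i) * ∑ j ∈ S, ∑ k ∈ S \ {j}, r k / r j))
        + K' * ∑ S ∈ Finset.powersetCard K' (Finset.univ : Finset (Fin M)), ∏ i ∈ S, r i := by
  have hne : ((M : ℝ) - K' + 1) ≠ 0 := by
    have : (K' : ℝ) ≤ M := by exact_mod_cast hKM
    linarith
  set A : ℝ := ∑ S ∈ Finset.powersetCard (K' - 1) (Finset.univ : Finset (Fin M)),
      (∏ i ∈ S, r i) * ∑ i ∈ S, r i with hA
  -- Claim 2: the big double sum equals (M - K' + 1) * A
  have claim2 :
      (∑ S ∈ Finset.powersetCard K' (Finset.univ : Finset (Fin M)),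
        ((∏ i ∈ S, r i) * ∑ j ∈ S, ∑ k ∈ S \ {j}, r k / r j))
        = ((M : ℝ) - K' + 1) * A := by
    have step1 : ∀ T ∈ Finset.powersetCard K' (Finset.univ : Finset (Fin M)),
        (∏ i ∈ T, r i) * ∑ j ∈ T, ∑ k ∈ T \ {j}, r k / r j
          = ∑ j ∈ T, (∏ i ∈ T.erase j, r i) * ∑ k ∈ T.erase j, r k := by
      intro T hT
      rw [Finset.mul_sum]
      refine Finset.sum_congr rfl fun j hj => ?_
      rw [Finset.sdiff_singleton_eq_erase]
      have hrj : r j ≠ 0 := (hpos j).ne'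
      have hprod : (∏ i ∈ T, r i) = r j * ∏ i ∈ T.erase j, r i :=
        (Finset.mul_prod_erase T r hj).symm
      rw [hprod, ← Finset.sum_div]
      field_simp
    rw [Finset.sum_congr rfl step1,
      pair_sum hK1 (fun S _ => (∏ i ∈ S, r i) * ∑ k ∈ S, r k)]
    have hcard : ∀ S ∈ Finset.powersetCard (K' - 1) (Finset.univ : Finset (Fin M)),
        ∑ _j ∈ Sᶜ, ((∏ i ∈ S, r i) * ∑ k ∈ S, r k)
          = ((M : ℝ) - K' + 1) * ((∏ i ∈ S, r i) * ∑ k ∈ S, r k) := by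
      intro S hS
      rw [Finset.sum_const, nsmul_eq_mul]
      congr 1
      rw [Finset.card_compl, (Finset.mem_powersetCard_univ.mp hS)]
      simp only [Fintype.card_fin]
      have : (K' - 1 : ℕ) ≤ M := by omega
      push_cast [Nat.cast_sub this, Nat.cast_sub hK1]
      ring
    rw [Finset.sum_congr rfl hcard, ← Finset.mul_sum]
  -- Claim 1: LHS = A + K' * e_K'
  have claim1 :
      (∑ S ∈ Finset.powersetCard (K' - 1) (Finset.univ : Finset (Fin M)), ∏ i ∈ S, r i)
          * (∑ i, r i)
        = A + K' * ∑ S ∈ Finset.powersetCard K' (Finset.univ : Finset (Fin M)),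
            ∏ i ∈ S, r i := by
    rw [Finset.sum_mul]
    have split : ∀ S ∈ Finset.powersetCard (K' - 1) (Finset.univ : Finset (Fin M)),
        (∏ i ∈ S, r i) * (∑ i, r i)
          = (∏ i ∈ S, r i) * ∑ i ∈ S, r i + ∑ j ∈ Sᶜ, (∏ i ∈ S, r i) * r j := by
      intro S hS
      rw [← Finset.mul_sum, ← mul_add, Finset.sum_add_sum_compl]
    rw [Finset.sum_congr rfl split, Finset.sum_add_distrib]
    congr 1
    rw [← pair_sum hK1 (fun S j => (∏ i ∈ S, r i) * r j)]
    have inner : ∀ T ∈ Finset.powersetCard K' (Finset.univ : Finset (Fin M)),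
        ∑ j ∈ T, (∏ i ∈ T.erase j, r i) * r j
          = (K' : ℝ) * ∏ i ∈ T, r i := by
      intro T hT
      have : ∀ j ∈ T, (∏ i ∈ T.erase j, r i) * r j = ∏ i ∈ T, r i := by
        intro j hj
        rw [mul_comm, Finset.mul_prod_erase T r hj]
      rw [Finset.sum_congr rfl this, Finset.sum_const,
        (Finset.mem_powersetCard_univ.mp hT), nsmul_eq_mul]
    rw [Finset.sum_congr rfl inner, ← Finset.mul_sum]
  rw [claim1, claim2]
  field_simp
end

section
/- Suppose y = |A x| (entrywise modulus) where x ∈ ℂ^N, x has a single nonzero entry x_n, and a measurement block equals (e_S ⊙ T) where T is the 2×N matrix with first row all ones and second row (2cos(ω), 2cos(2ω), …, 2cos(Nω)) for ω ∈ (0, π/(2N)]. If the block's two measurements are y¹ = |x_n| and y² = |2cos(nω) x_n|, then |x_n| = y¹ and n = (1/ω)·arccos(y²/(2y¹)). -/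
theorem stmt12 (N n : ℕ) (hn1 : 1 ≤ n) (hnN : n ≤ N)
    (ω : ℝ) (hω0 : 0 < ω) (hωN : ω ≤ Real.pi / (2 * N))
    (x : ℕ → ℂ) (hsupp : ∀ m, m ≠ n → x m = 0) (hxn : x n ≠ 0)
    (y1 y2 : ℝ)
    (hy1 : y1 = ‖∑ m ∈ Finset.Icc 1 N, x m‖)
    (hy2 : y2 = ‖∑ m ∈ Finset.Icc 1 N,
        ((2 * Real.cos ((m : ℝ) * ω) : ℝ) : ℂ) * x m‖) :
    ‖x n‖ = y1 ∧ (n : ℝ) = (1 / ω) * Real.arccos (y2 / (2 * y1)) := by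
  have hnmem : n ∈ Finset.Icc 1 N := Finset.mem_Icc.mpr ⟨hn1, hnN⟩
  have hs1 : (∑ m ∈ Finset.Icc 1 N, x m) = x n := by
    rw [Finset.sum_eq_single_of_mem n hnmem]
    intro b _ hb; exact hsupp b hb
  have hs2 : (∑ m ∈ Finset.Icc 1 N,
      ((2 * Real.cos ((m : ℝ) * ω) : ℝ) : ℂ) * x m)
      = ((2 * Real.cos ((n : ℝ) * ω) : ℝ) : ℂ) * x n := by
    rw [Finset.sum_eq_single_of_mem n hnmem]
    intro b _ hb; rw [hsupp b hb, mul_zero]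
  have hy1' : y1 = ‖x n‖ := by rw [hy1, hs1]
  have hNpos : (0:ℝ) < N := by
    have : (1:ℝ) ≤ (n:ℝ) := by exact_mod_cast hn1
    have : (1:ℝ) ≤ (N:ℝ) := le_trans this (by exact_mod_cast hnN)
    linarith
  have hnω : 0 < (n:ℝ) * ω := by positivity
  have hnωle : (n:ℝ) * ω ≤ Real.pi / 2 := by
    have hn : (n:ℝ) ≤ N := by exact_mod_cast hnN
    have := mul_le_mul hn hωN (le_of_lt hω0) (le_of_lt (by positivity : (0:ℝ) < (N:ℝ)))
    calc (n:ℝ) * ω ≤ (N:ℝ) * (Real.pi / (2 * N)) := this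
      _ = Real.pi / 2 := by field_simp
  have hcos : 0 ≤ Real.cos ((n:ℝ) * ω) :=
    Real.cos_nonneg_of_mem_Icc ⟨by linarith [Real.pi_pos], hnωle⟩
  have hy2' : y2 = 2 * Real.cos ((n:ℝ) * ω) * ‖x n‖ := by
    rw [hy2, hs2, norm_mul, Complex.norm_real, Real.norm_eq_abs, abs_of_nonneg (by positivity)]
  constructor
  · exact hy1'.symm
  · have habs : ‖x n‖ ≠ 0 := by
      simpa using hxn
    have hratio : y2 / (2 * y1) = Real.cos ((n:ℝ) * ω) := by
      rw [hy1', hy2']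
      field_simp
    rw [hratio, Real.arccos_cos (by linarith) (by linarith [Real.pi_pos, hnωle])]
    field_simp
end
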